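/- Let n ≥ 2 and let F be a maximal laminar family of subsets of [n] with all members of cardinality at least 2. Then F is admissible — i.e., the second-smallest elements secondmin S, for S ∈ F, are pairwise distinct (equivalently, they are exactly the numbers 2, 3, …, n, each occurring once) — if and only if the edge set {{min S, secondmin S} : S ∈ F} is a spanning tree of the complete graph K_n on vertex set [n]. -/

import Mathlib

/-- A family of subsets of `[n]` is laminar if any two members are disjoint or comparable. -/
def Laminar {n : ℕ} (F : Finset (Finset (Fin n))) : Prop :=
  ∀ S ∈ F, ∀ T ∈ F, S ⊆ T ∨ T ⊆ S ∨ Disjoint S T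

/-- A laminar family on `[n]` all of whose members have cardinality at least `2`. -/
def GoodLaminar (n : ℕ) (F : Finset (Finset (Fin n))) : Prop :=
  Laminar F ∧ ∀ S ∈ F, 2 ≤ S.card

/-- A maximal laminar family of subsets of `[n]` with all members of cardinality `≥ 2`. -/
def MaxGoodLaminar (n : ℕ) (F : Finset (Finset (Fin n))) : Prop :=
  GoodLaminar n F ∧ ∀ G : Finset (Finset (Fin n)), GoodLaminar n G → F ⊆ G → G = F

/-- `{min S, secondmin S}`: the set of the two smallest elements of `S`. -/
def minTwo {n : ℕ} (S : Finset (Fin n)) : Finset (Fin n) :=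
  ((S.sort (· ≤ ·)).take 2).toFinset

/-- The simple graph on `Fin n` associated with a set `E` of (two-element) subsets. -/
def graphOf {n : ℕ} (E : Finset (Finset (Fin n))) : SimpleGraph (Fin n) where
  Adj x y := x ≠ y ∧ ∃ e ∈ E, x ∈ e ∧ y ∈ e
  symm := ⟨fun _ _ h => ⟨h.1.symm, h.2.imp fun _ he => ⟨he.1, he.2.2, he.2.1⟩⟩⟩
  loopless := ⟨fun _ h => h.1 rfl⟩

/-- `E` is a spanning tree of the complete graph `K_n` on vertex set `Fin n`:  a set of
`n - 1` two-element subsets forming a connected acyclic graph on all `n` vertices. -/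
def IsSpanningTree (n : ℕ) (E : Finset (Finset (Fin n))) : Prop :=
  (∀ e ∈ E, e.card = 2) ∧ E.card = n - 1 ∧ (graphOf E).Connected ∧ (graphOf E).IsAcyclic

/-- The second-smallest element of `S` (as an `Option`; `some` whenever `|S| ≥ 2`). -/
def secondmin? {n : ℕ} (S : Finset (Fin n)) : Option (Fin n) :=
  ((S.sort (· ≤ ·)).drop 1).head?

set_option linter.unusedSectionVars false

section LaminarHelpers

open Finset

variable {n : ℕ} [NeZero n]

def fmin (S : Finset (Fin n)) : Fin n := S.min.getD 0

lemma fmin_eq_min' {S : Finset (Fin n)} (h : S.Nonempty) : fmin S = S.min' h := by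
  rw [fmin, ← Finset.coe_min' h]; rfl

lemma fmin_mem {S : Finset (Fin n)} (h : S.Nonempty) : fmin S ∈ S := by
  rw [fmin_eq_min' h]; exact S.min'_mem h

lemma fmin_le {S : Finset (Fin n)} {x : Fin n} (hx : x ∈ S) : fmin S ≤ x := by
  rw [fmin_eq_min' ⟨x, hx⟩]; exact S.min'_le x hx

def smin (S : Finset (Fin n)) : Fin n := fmin (S.erase (fmin S))

lemma erase_fmin_nonempty {S : Finset (Fin n)} (h2 : 2 ≤ S.card) :
    (S.erase (fmin S)).Nonempty := by
  rw [← Finset.card_pos, Finset.card_erase_of_mem (fmin_mem (by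
    rw [← Finset.card_pos]; omega))]
  omega

lemma smin_mem_erase {S : Finset (Fin n)} (h2 : 2 ≤ S.card) :
    smin S ∈ S.erase (fmin S) := fmin_mem (erase_fmin_nonempty h2)

lemma smin_mem {S : Finset (Fin n)} (h2 : 2 ≤ S.card) : smin S ∈ S :=
  Finset.mem_of_mem_erase (smin_mem_erase h2)

lemma smin_ne_fmin {S : Finset (Fin n)} (h2 : 2 ≤ S.card) : smin S ≠ fmin S :=
  Finset.ne_of_mem_erase (smin_mem_erase h2)

lemma fmin_lt_smin {S : Finset (Fin n)} (h2 : 2 ≤ S.card) : fmin S < smin S :=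
  lt_of_le_of_ne (fmin_le (smin_mem h2)) (smin_ne_fmin h2).symm

lemma smin_le {S : Finset (Fin n)} {x : Fin n} (hx : x ∈ S) (hne : x ≠ fmin S) :
    smin S ≤ x := fmin_le (Finset.mem_erase.2 ⟨hne, hx⟩)

lemma sort_eq_cons {S : Finset (Fin n)} (h : S.Nonempty) :
    S.sort (· ≤ ·) = fmin S :: (S.erase (fmin S)).sort (· ≤ ·) := by
  conv_lhs => rw [← Finset.insert_erase (fmin_mem h)]
  exact Finset.sort_insert _ (fun b hb => fmin_le (Finset.mem_of_mem_erase hb))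
    (Finset.notMem_erase _ _)

lemma secondmin?_eq {S : Finset (Fin n)} (h2 : 2 ≤ S.card) :
    secondmin? S = some (smin S) := by
  rw [secondmin?, sort_eq_cons (show S.Nonempty by rw [← Finset.card_pos]; omega),
    List.drop_one, List.tail_cons, sort_eq_cons (erase_fmin_nonempty h2)]
  rfl

lemma minTwo_eq {S : Finset (Fin n)} (h2 : 2 ≤ S.card) :
    minTwo S = {fmin S, smin S} := by
  rw [minTwo, sort_eq_cons (show S.Nonempty by rw [← Finset.card_pos]; omega),
    sort_eq_cons (erase_fmin_nonempty h2)]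
  simp [List.take]
  rfl

variable {n : ℕ} [NeZero n]

def kpart (F : Finset (Finset (Fin n))) (S : Finset (Fin n)) : Finset (Fin n) :=
  insert (fmin S) ((F.filter (fun T => T ⊂ S ∧ fmin S ∈ T)).biUnion id)

def phi (F : Finset (Finset (Fin n))) (S : Finset (Fin n)) : Fin n :=
  fmin (S \ kpart F S)

lemma exists_maxProper {F : Finset (Finset (Fin n))} {S T : Finset (Fin n)}
    (hT : T ∈ F) (hTS : T ⊂ S) :
    ∃ C ∈ F, T ⊆ C ∧ C ⊂ S ∧ ∀ U ∈ F, C ⊆ U → U ⊂ S → U = C := by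
  obtain ⟨C, hC, hmax⟩ := Finset.exists_max_image
    (F.filter (fun U => T ⊆ U ∧ U ⊂ S)) Finset.card ⟨T, by simp [hT, hTS]⟩
  rw [Finset.mem_filter] at hC
  refine ⟨C, hC.1, hC.2.1, hC.2.2, fun U hU hCU hUS => ?_⟩
  have hU' : U ∈ F.filter (fun U => T ⊆ U ∧ U ⊂ S) :=
    Finset.mem_filter.2 ⟨hU, hC.2.1.trans hCU, hUS⟩
  exact (Finset.eq_of_subset_of_card_le hCU (hmax U hU')).symm

lemma kpart_subset {F : Finset (Finset (Fin n))} {S : Finset (Fin n)} (h : S.Nonempty) :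
    kpart F S ⊆ S := by
  rw [kpart]
  refine Finset.insert_subset (fmin_mem h) ?_
  intro x hx
  rw [Finset.mem_biUnion] at hx
  obtain ⟨T, hT, hxT⟩ := hx
  rw [Finset.mem_filter] at hT
  exact hT.2.1.1 hxT

lemma fmin_mem_kpart {F : Finset (Finset (Fin n))} {S : Finset (Fin n)} :
    fmin S ∈ kpart F S := Finset.mem_insert_self _ _

lemma subset_kpart_of_filter {F : Finset (Finset (Fin n))} {S T : Finset (Fin n)}
    (hT : T ∈ F) (hTS : T ⊂ S) (hm : fmin S ∈ T) : T ⊆ kpart F S := by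
  intro x hx
  exact Finset.mem_insert_of_mem (Finset.mem_biUnion.2
    ⟨T, Finset.mem_filter.2 ⟨hT, hTS, hm⟩, hx⟩)

lemma sdiff_kpart_nonempty {F : Finset (Finset (Fin n))} {S : Finset (Fin n)}
    (hlam : Laminar F) (hS : S ∈ F) (h2 : 2 ≤ S.card) :
    (S \ kpart F S).Nonempty := by
  rcases (F.filter (fun T => T ⊂ S ∧ fmin S ∈ T)).eq_empty_or_nonempty with he | ⟨T₀, hT₀⟩
  · refine ⟨smin S, Finset.mem_sdiff.2 ⟨smin_mem h2, ?_⟩⟩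
    rw [kpart, he]
    simp [smin_ne_fmin h2]
  · rw [Finset.mem_filter] at hT₀
    obtain ⟨C, hC, hTC, hCS, hCmax⟩ := exists_maxProper hT₀.1 hT₀.2.1
    have hkC : kpart F S ⊆ C := by
      rw [kpart]
      refine Finset.insert_subset (hTC hT₀.2.2) ?_
      intro x hx
      rw [Finset.mem_biUnion] at hx
      obtain ⟨U, hU, hxU⟩ := hx
      rw [Finset.mem_filter] at hU
      have hnd : ¬ Disjoint U C := fun hd =>
        (Finset.disjoint_left.1 hd hU.2.2) (hTC hT₀.2.2)
      rcases hlam U hU.1 C hC with h | h | h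
      · exact h hxU
      · exact (hCmax U hU.1 h hU.2.1) ▸ hxU
      · exact absurd h hnd
    obtain ⟨x, hxS, hxC⟩ := Finset.exists_of_ssubset hCS
    exact ⟨x, Finset.mem_sdiff.2 ⟨hxS, fun hx => hxC (hkC hx)⟩⟩

lemma phi_mem_sdiff {F : Finset (Finset (Fin n))} {S : Finset (Fin n)}
    (hlam : Laminar F) (hS : S ∈ F) (h2 : 2 ≤ S.card) :
    phi F S ∈ S \ kpart F S := fmin_mem (sdiff_kpart_nonempty hlam hS h2)

lemma phi_mem {F : Finset (Finset (Fin n))} {S : Finset (Fin n)}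
    (hlam : Laminar F) (hS : S ∈ F) (h2 : 2 ≤ S.card) : phi F S ∈ S :=
  (Finset.mem_sdiff.1 (phi_mem_sdiff hlam hS h2)).1

lemma phi_not_mem_kpart {F : Finset (Finset (Fin n))} {S : Finset (Fin n)}
    (hlam : Laminar F) (hS : S ∈ F) (h2 : 2 ≤ S.card) : phi F S ∉ kpart F S :=
  (Finset.mem_sdiff.1 (phi_mem_sdiff hlam hS h2)).2

lemma phi_ne_fmin {F : Finset (Finset (Fin n))} {S : Finset (Fin n)}
    (hlam : Laminar F) (hS : S ∈ F) (h2 : 2 ≤ S.card) : phi F S ≠ fmin S :=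
  fun h => phi_not_mem_kpart hlam hS h2 (h ▸ fmin_mem_kpart)

lemma fmin_lt_phi {F : Finset (Finset (Fin n))} {S : Finset (Fin n)}
    (hlam : Laminar F) (hS : S ∈ F) (h2 : 2 ≤ S.card) : fmin S < phi F S :=
  lt_of_le_of_ne (fmin_le (phi_mem hlam hS h2)) (phi_ne_fmin hlam hS h2).symm

lemma phi_ne_zero {F : Finset (Finset (Fin n))} {S : Finset (Fin n)}
    (hlam : Laminar F) (hS : S ∈ F) (h2 : 2 ≤ S.card) : phi F S ≠ 0 := by
  intro h
  have := fmin_lt_phi hlam hS h2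
  rw [h] at this
  exact absurd this (by simp [Fin.le_zero_iff])

lemma phi_le {F : Finset (Finset (Fin n))} {S : Finset (Fin n)} {x : Fin n}
    (hx : x ∈ S \ kpart F S) : phi F S ≤ x := fmin_le hx

lemma phi_ne_of_ssubset {F : Finset (Finset (Fin n))} {S T : Finset (Fin n)}
    (hlam : Laminar F) (h2 : ∀ S ∈ F, 2 ≤ S.card)
    (hS : S ∈ F) (hT : T ∈ F) (hST : S ⊂ T) : phi F S ≠ phi F T := by
  intro heq
  have h2S := h2 S hS
  have h2T := h2 T hT
  have hvS : phi F S ∈ S := phi_mem hlam hS h2S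
  have hvKS : phi F S ∉ kpart F S := phi_not_mem_kpart hlam hS h2S
  have hvKT : phi F S ∉ kpart F T := heq ▸ phi_not_mem_kpart hlam hT h2T
  by_cases hmT : fmin T ∈ S
  · exact hvKT (subset_kpart_of_filter hS hST hmT hvS)
  · by_cases hk : fmin S ∈ kpart F T
    · rcases Finset.mem_insert.1 hk with h | h
      · exact hmT (h ▸ fmin_mem (⟨_, hvS⟩ : S.Nonempty))
      · rw [Finset.mem_biUnion] at h
        obtain ⟨U, hU, hxU⟩ := h
        rw [Finset.mem_filter] at hU
        rcases hlam S hS U hU.1 with hc | hc | hc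
        · exact hvKT (subset_kpart_of_filter hU.1 hU.2.1 hU.2.2 (hc hvS))
        · exact hmT (hc hU.2.2)
        · exact (Finset.disjoint_left.1 hc (fmin_mem ⟨_, hvS⟩)) hxU
    · have h1 : phi F T ≤ fmin S :=
        phi_le (Finset.mem_sdiff.2 ⟨hST.1 (fmin_mem ⟨_, hvS⟩), hk⟩)
      have h2' : fmin S < phi F S := fmin_lt_phi hlam hS h2S
      rw [← heq] at h1
      exact absurd h1 (not_le.2 h2')

lemma phi_inj {F : Finset (Finset (Fin n))} {S T : Finset (Fin n)}
    (hlam : Laminar F) (h2 : ∀ S ∈ F, 2 ≤ S.card)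
    (hS : S ∈ F) (hT : T ∈ F) (heq : phi F S = phi F T) : S = T := by
  by_contra hne
  have hvS : phi F S ∈ S := phi_mem hlam hS (h2 S hS)
  have hvT : phi F S ∈ T := heq ▸ phi_mem hlam hT (h2 T hT)
  have hnd : ¬ Disjoint S T := fun hd => (Finset.disjoint_left.1 hd hvS) hvT
  rcases hlam S hS T hT with hc | hc | hc
  · exact phi_ne_of_ssubset hlam h2 hS hT (lt_of_le_of_ne hc hne) heq
  · exact phi_ne_of_ssubset hlam h2 hT hS (lt_of_le_of_ne hc (Ne.symm hne)) heq.symm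
  · exact hnd hc

lemma univ_mem {F : Finset (Finset (Fin n))} (hn : 2 ≤ n) (hmax : MaxGoodLaminar n F) :
    (Finset.univ : Finset (Fin n)) ∈ F := by
  have hgood : GoodLaminar n (insert Finset.univ F) := by
    constructor
    · intro S hS T hT
      rcases Finset.mem_insert.1 hS with rfl | hS' <;>
        rcases Finset.mem_insert.1 hT with rfl | hT'
      · exact Or.inl subset_rfl
      · exact Or.inr (Or.inl (Finset.subset_univ _))
      · exact Or.inl (Finset.subset_univ _)
      · exact hmax.1.1 S hS' T hT'
    · intro S hS
      rcases Finset.mem_insert.1 hS with rfl | hS'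
      · simpa using hn
      · exact hmax.1.2 S hS'
  have := hmax.2 _ hgood (Finset.subset_insert _ _)
  rw [← this]; exact Finset.mem_insert_self _ _

lemma phi_surj {F : Finset (Finset (Fin n))} (hn : 2 ≤ n) (hmax : MaxGoodLaminar n F)
    (v : Fin n) (hv : v ≠ 0) : ∃ S ∈ F, phi F S = v := by
  obtain ⟨⟨hlam, h2⟩, -⟩ := id hmax
  have huniv : Finset.univ ∈ F := univ_mem hn hmax
  have hGv : Finset.univ ∈ F.filter (fun T => v ∈ T ∧ fmin T ≠ v) := by
    refine Finset.mem_filter.2 ⟨huniv, Finset.mem_univ _, ?_⟩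
    have h0 : fmin (Finset.univ : Finset (Fin n)) ≤ 0 := fmin_le (Finset.mem_univ _)
    have h0' : fmin (Finset.univ : Finset (Fin n)) = 0 := le_antisymm h0 (Fin.zero_le _)
    rw [h0']; exact Ne.symm hv
  obtain ⟨S, hSGv, hmin⟩ := Finset.exists_min_image _ Finset.card ⟨_, hGv⟩
  rw [Finset.mem_filter] at hSGv
  obtain ⟨hS, hvS, hfv⟩ := hSGv
  have h2S := h2 S hS
  have hminimal : ∀ T ∈ F, T ⊂ S → v ∈ T → fmin T = v := by
    intro T hT hTS hvT
    by_contra hne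
    have := hmin T (Finset.mem_filter.2 ⟨hT, hvT, hne⟩)
    exact absurd (Finset.card_lt_card hTS) (not_lt.2 this)
  have hfSv : fmin S < v := lt_of_le_of_ne (fmin_le hvS) hfv
  have hvsd : v ∈ S \ kpart F S := by
    refine Finset.mem_sdiff.2 ⟨hvS, ?_⟩
    intro hk
    rcases Finset.mem_insert.1 hk with h | h
    · exact hfv h.symm
    · rw [Finset.mem_biUnion] at h
      obtain ⟨U, hU, hvU⟩ := h
      rw [Finset.mem_filter] at hU
      have heq : fmin U = v := hminimal U hU.1 hU.2.1 hvU
      have hle : fmin U ≤ fmin S := fmin_le hU.2.2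
      rw [heq] at hle
      exact absurd hfSv (not_lt.2 hle)
  by_contra hnot
  push_neg at hnot
  have hxv : phi F S ≠ v := hnot S hS
  have hxle : phi F S ≤ v := phi_le hvsd
  set x := phi F S with hxdef
  have hxS : x ∈ S := phi_mem hlam hS h2S
  have hxK : x ∉ kpart F S := phi_not_mem_kpart hlam hS h2S
  have hxlt : x < v := lt_of_le_of_ne hxle hxv
  obtain ⟨Cx, hCxS, hxCx, hvCx, hCxprop⟩ :
      ∃ Cx : Finset (Fin n), Cx ⊆ S ∧ x ∈ Cx ∧ v ∉ Cx ∧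
        ∀ U ∈ F, U ⊂ S → ¬ Disjoint U Cx → U ⊆ Cx := by
    by_cases hex : ∃ T ∈ F, T ⊂ S ∧ x ∈ T
    · obtain ⟨T₁, hT₁, hT₁S, hxT₁⟩ := hex
      obtain ⟨C, hC, hTC, hCS, hCmax⟩ := exists_maxProper hT₁ hT₁S
      refine ⟨C, hCS.1, hTC hxT₁, ?_, ?_⟩
      · intro hvC
        have heq := hminimal C hC hCS hvC
        have hle : fmin C ≤ x := fmin_le (hTC hxT₁)
        rw [heq] at hle
        exact absurd hxlt (not_lt.2 hle)
      · intro U hU hUS hnd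
        rcases hlam U hU C hC with h | h | h
        · exact h
        · exact (hCmax U hU h hUS) ▸ subset_rfl
        · exact absurd h hnd
    · refine ⟨{x}, Finset.singleton_subset_iff.2 hxS, Finset.mem_singleton_self x,
        fun h => hxv (Finset.mem_singleton.1 h).symm, ?_⟩
      intro U hU hUS hnd
      exfalso
      exact hex ⟨U, hU, hUS, by rwa [Finset.disjoint_singleton_right, not_not] at hnd⟩
  set A := kpart F S ∪ Cx with hAdef
  have hkQ : ∀ U ∈ F, U ⊂ S → ¬ Disjoint U (kpart F S) → U ⊆ kpart F S := by
    intro U hU hUS hnd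
    rw [Finset.not_disjoint_iff] at hnd
    obtain ⟨y, hyU, hyK⟩ := hnd
    rcases Finset.mem_insert.1 hyK with h | h
    · exact subset_kpart_of_filter hU hUS (h ▸ hyU)
    · rw [Finset.mem_biUnion] at h
      obtain ⟨U', hU', hyU'⟩ := h
      rw [Finset.mem_filter] at hU'
      rcases hlam U hU U' hU'.1 with h | h | h
      · exact h.trans (subset_kpart_of_filter hU'.1 hU'.2.1 hU'.2.2)
      · exact subset_kpart_of_filter hU hUS (h hU'.2.2)
      · exact absurd hyU' (Finset.disjoint_left.1 h hyU)
  have hAS : A ⊆ S := Finset.union_subset (kpart_subset ⟨_, hvS⟩) hCxS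
  have hvA : v ∉ A := fun h =>
    (Finset.mem_union.1 h).elim (Finset.mem_sdiff.1 hvsd).2 hvCx
  have hAproper : A ⊂ S := (Finset.ssubset_iff_of_subset hAS).2 ⟨v, hvS, hvA⟩
  have hxA : x ∈ A := Finset.mem_union_right _ hxCx
  have hfA : fmin S ∈ A := Finset.mem_union_left _ fmin_mem_kpart
  have hAcard : 2 ≤ A.card := by
    have hxf : x ≠ fmin S := phi_ne_fmin hlam hS h2S
    have hsub : {fmin S, x} ⊆ A := by
      intro y hy
      rcases Finset.mem_insert.1 hy with rfl | hy
      · exact hfA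
      · rw [Finset.mem_singleton] at hy; subst hy; exact hxA
    have hc2 : ({fmin S, x} : Finset (Fin n)).card = 2 := by
      rw [Finset.card_insert_of_notMem (by simp [Ne.symm hxf]), Finset.card_singleton]
    exact hc2 ▸ Finset.card_le_card hsub
  have hAnotF : A ∉ F := fun hA' =>
    hxK (subset_kpart_of_filter hA' hAproper hfA hxA)
  have hkey : ∀ T ∈ F, A ⊆ T ∨ T ⊆ A ∨ Disjoint A T := by
    intro T hT
    rcases hlam S hS T hT with h | h | h
    · exact Or.inl (hAS.trans h)
    · rcases eq_or_ne T S with rfl | hne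
      · exact Or.inl hAS
      · have hTS : T ⊂ S := lt_of_le_of_ne h hne
        by_cases hd1 : Disjoint T (kpart F S)
        · by_cases hd2 : Disjoint T Cx
          · exact Or.inr (Or.inr (Finset.disjoint_union_left.2 ⟨hd1.symm, hd2.symm⟩))
          · exact Or.inr (Or.inl ((hCxprop T hT hTS hd2).trans Finset.subset_union_right))
        · exact Or.inr (Or.inl ((hkQ T hT hTS hd1).trans Finset.subset_union_left))
    · exact Or.inr (Or.inr (Finset.disjoint_of_subset_left hAS h))
  have hgood : GoodLaminar n (insert A F) := by
    constructor
    · intro S₁ h₁ T₁ h₂'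
      rcases Finset.mem_insert.1 h₁ with rfl | h₁' <;>
        rcases Finset.mem_insert.1 h₂' with rfl | h₂''
      · exact Or.inl subset_rfl
      · exact hkey T₁ h₂''
      · rcases hkey S₁ h₁' with h | h | h
        · exact Or.inr (Or.inl h)
        · exact Or.inl h
        · exact Or.inr (Or.inr h.symm)
      · exact hlam S₁ h₁' T₁ h₂''
    · intro S₁ h₁
      rcases Finset.mem_insert.1 h₁ with rfl | h₁'
      · exact hAcard
      · exact h2 S₁ h₁'
  have heqF := hmax.2 _ hgood (Finset.subset_insert _ _)
  exact hAnotF (heqF ▸ Finset.mem_insert_self A F)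

lemma card_eq {F : Finset (Finset (Fin n))} (hn : 2 ≤ n) (hmax : MaxGoodLaminar n F) :
    F.card = n - 1 := by
  obtain ⟨⟨hlam, h2⟩, -⟩ := id hmax
  have := Finset.card_bij (fun S _ => phi F S)
    (fun S hS => Finset.mem_erase.2 ⟨phi_ne_zero hlam hS (h2 S hS), Finset.mem_univ _⟩)
    (fun S hS T hT heq => phi_inj hlam h2 hS hT heq)
    (fun v hv => by
      obtain ⟨S, hS, hphi⟩ := phi_surj hn hmax v (Finset.mem_erase.1 hv).1
      exact ⟨S, hS, hphi⟩)
  rw [this, Finset.card_erase_of_mem (Finset.mem_univ _), Finset.card_univ, Fintype.card_fin]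

lemma getVert_eq_support_get {V : Type*} {G : SimpleGraph V} {u v : V} (p : G.Walk u v)
    (i : ℕ) (hi : i ≤ p.length) :
    p.getVert i = p.support.get ⟨i, by rw [SimpleGraph.Walk.length_support]; omega⟩ := by
  induction p generalizing i with
  | nil =>
    have : i = 0 := by simpa using hi
    subst this
    simp [SimpleGraph.Walk.getVert]
  | cons h p ih =>
    cases i with
    | zero => simp
    | succ i =>
      rw [SimpleGraph.Walk.getVert_cons_succ, ih i (by simpa using hi)]
      simp [SimpleGraph.Walk.support_cons]

lemma acyclic_of_unique_smaller {G : SimpleGraph (Fin n)}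
    (huniq : ∀ x y z, G.Adj x y → G.Adj x z → y < x → z < x → y = z) : G.IsAcyclic := by
  intro v c hc
  have hsupne : v ∈ c.support := SimpleGraph.Walk.start_mem_support c
  have hne : c.support.toFinset.Nonempty := ⟨v, by simpa using hsupne⟩
  set M := c.support.toFinset.max' hne with hM
  have hMmem : M ∈ c.support := by
    have := c.support.toFinset.max'_mem hne
    simpa using this
  set c' := c.rotate M hMmem with hc'def
  have hc' : c'.IsCycle := hc.rotate hMmem
  have hL : 3 ≤ c'.length := hc'.three_le_length
  have hmaxp : ∀ w ∈ c'.support, w ≤ M := by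
    intro w hw
    rw [SimpleGraph.Walk.support_eq_cons] at hw
    have hw' : w ∈ c.support := by
      rcases List.mem_cons.1 hw with rfl | hw
      · exact hMmem
      · have : w ∈ c.support.tail := (SimpleGraph.Walk.support_rotate c M hMmem).mem_iff.1 hw
        rw [SimpleGraph.Walk.support_eq_cons] at *
        exact List.mem_cons_of_mem _ this
    exact Finset.le_max' _ w (by simpa using hw')
  set b := c'.getVert 1 with hbdef
  set a := c'.getVert (c'.length - 1) with hadef
  have hadj1 : G.Adj M b := by
    have := c'.adj_getVert_succ (show 0 < c'.length by omega)
    simpa using this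
  have hadj2 : G.Adj a M := by
    have := c'.adj_getVert_succ (show c'.length - 1 < c'.length by omega)
    rwa [Nat.sub_add_cancel (by omega), SimpleGraph.Walk.getVert_length] at this
  have hbmem : b ∈ c'.support :=
    SimpleGraph.Walk.mem_support_iff_exists_getVert.2 ⟨1, rfl, by omega⟩
  have hamem : a ∈ c'.support :=
    SimpleGraph.Walk.mem_support_iff_exists_getVert.2 ⟨c'.length - 1, rfl, by omega⟩
  have hblt : b < M := lt_of_le_of_ne (hmaxp b hbmem) hadj1.ne'
  have halt : a < M := lt_of_le_of_ne (hmaxp a hamem) hadj2.ne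
  have hba : b = a := huniq M b a hadj1 hadj2.symm hblt halt
  have hnd : c'.support.tail.Nodup := hc'.support_nodup
  have hlen : c'.support.length = c'.length + 1 := SimpleGraph.Walk.length_support c'
  have hlt : c'.support.tail.length = c'.length := by
    rw [List.length_tail, hlen]; omega
  have e1 : c'.support.tail.get ⟨0, by omega⟩ = b := by
    rw [List.get_tail _ 0 (by omega) (by omega)]
    rw [hbdef, getVert_eq_support_get c' 1 (by omega)]
  have e2 : c'.support.tail.get ⟨c'.length - 2, by omega⟩ = a := by
    rw [List.get_tail _ _ (by omega) (by omega)]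
    have hidx : c'.length - 1 = c'.length - 2 + 1 := by omega
    rw [hadef, hidx, getVert_eq_support_get c' (c'.length - 2 + 1) (by omega)]
  have h02 := (List.Nodup.get_inj_iff hnd).1 (e1.trans (hba.trans e2.symm))
  have : (0 : ℕ) = c'.length - 2 := congrArg Fin.val h02
  omega

lemma minTwo_card {S : Finset (Fin n)} (h2 : 2 ≤ S.card) : (minTwo S).card = 2 := by
  rw [minTwo_eq h2, Finset.card_insert_of_notMem (by simp [Ne.symm (smin_ne_fmin h2)]),
    Finset.card_singleton]

lemma pair_eq_iff {a b c d : Fin n} (hab : a < b) (hcd : c < d)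
    (h : ({a, b} : Finset (Fin n)) = {c, d}) : a = c ∧ b = d := by
  have ha : a ∈ ({c, d} : Finset (Fin n)) := h ▸ (Finset.mem_insert_self _ _)
  have hb : b ∈ ({c, d} : Finset (Fin n)) := h ▸
    (Finset.mem_insert_of_mem (Finset.mem_singleton_self _))
  have hc : c ∈ ({a, b} : Finset (Fin n)) := h ▸ (Finset.mem_insert_self _ _)
  rcases Finset.mem_insert.1 ha with h1 | h1
  · subst h1
    rcases (by simpa using hb : b = a ∨ b = d) with rfl | rfl
    · exact absurd hab (lt_irrefl _)
    · exact ⟨rfl, rfl⟩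
  · rw [Finset.mem_singleton] at h1
    subst h1
    exfalso
    rcases (by simpa using hc : c = a ∨ c = b) with rfl | rfl
    · exact absurd hcd (lt_irrefl _)
    · exact absurd (hab.trans hcd) (lt_irrefl _)

lemma minTwo_injOn {F : Finset (Finset (Fin n))} (h2 : ∀ S ∈ F, 2 ≤ S.card)
    (adm : ∀ S ∈ F, ∀ T ∈ F, secondmin? S = secondmin? T → S = T)
    {S T : Finset (Fin n)} (hS : S ∈ F) (hT : T ∈ F) (heq : minTwo S = minTwo T) : S = T := by
  rw [minTwo_eq (h2 S hS), minTwo_eq (h2 T hT)] at heq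
  obtain ⟨-, h2'⟩ := pair_eq_iff (fmin_lt_smin (h2 S hS)) (fmin_lt_smin (h2 T hT)) heq
  exact adm S hS T hT (by rw [secondmin?_eq (h2 S hS), secondmin?_eq (h2 T hT), h2'])

end LaminarHelpers

/-- Let `n ≥ 2` and let `F` be a maximal laminar family of subsets of `[n]` with all members
of cardinality `≥ 2`.  Then `F` is admissible (the second-smallest elements of the members of
`F` are pairwise distinct) if and only if `{{min S, secondmin S} : S ∈ F}` is a spanning tree
of the complete graph `K_n`. -/
theorem admissible_iff_spanningTree (n : ℕ) (hn : 2 ≤ n)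
    (F : Finset (Finset (Fin n))) (hF : MaxGoodLaminar n F) :
    (∀ S ∈ F, ∀ T ∈ F, secondmin? S = secondmin? T → S = T) ↔
    IsSpanningTree n (F.image minTwo) := by
  haveI : NeZero n := ⟨by omega⟩
  obtain ⟨⟨hlam, h2⟩, -⟩ := id hF
  have hcardF : F.card = n - 1 := card_eq hn hF
  constructor
  · intro adm
    set E := F.image minTwo with hE
    have hEcard2 : ∀ e ∈ E, e.card = 2 := by
      intro e he
      obtain ⟨S, hS, rfl⟩ := Finset.mem_image.1 he
      exact minTwo_card (h2 S hS)
    have hEcard : E.card = n - 1 := by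
      rw [hE, Finset.card_image_of_injOn (fun S hS T hT => minTwo_injOn h2 adm hS hT), hcardF]
    have hsm_inj : ∀ S ∈ F, ∀ T ∈ F, smin S = smin T → S = T := by
      intro S hS T hT h
      exact adm S hS T hT (by rw [secondmin?_eq (h2 S hS), secondmin?_eq (h2 T hT), h])
    have hsm_surj : ∀ v : Fin n, v ≠ 0 → ∃ S ∈ F, smin S = v := by
      intro v hv
      have himg : F.image smin = (Finset.univ : Finset (Fin n)).erase 0 := by
        apply Finset.eq_of_subset_of_card_le
        · intro x hx
          obtain ⟨S, hS, rfl⟩ := Finset.mem_image.1 hx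
          refine Finset.mem_erase.2 ⟨?_, Finset.mem_univ _⟩
          intro h0
          have hlt := fmin_lt_smin (h2 S hS)
          rw [h0] at hlt
          exact absurd hlt (by simp [Fin.le_zero_iff])
        · rw [Finset.card_erase_of_mem (Finset.mem_univ _), Finset.card_univ, Fintype.card_fin,
            Finset.card_image_of_injOn (fun S hS T hT => hsm_inj S hS T hT), hcardF]
      have hvm : v ∈ F.image smin := by
        rw [himg]; exact Finset.mem_erase.2 ⟨hv, Finset.mem_univ _⟩
      obtain ⟨S, hS, h⟩ := Finset.mem_image.1 hvm
      exact ⟨S, hS, h⟩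
    have hadj : ∀ S ∈ F, (graphOf E).Adj (fmin S) (smin S) := by
      intro S hS
      show fmin S ≠ smin S ∧ ∃ e ∈ E, fmin S ∈ e ∧ smin S ∈ e
      refine ⟨(fmin_lt_smin (h2 S hS)).ne, minTwo S, Finset.mem_image_of_mem _ hS, ?_, ?_⟩
      · rw [minTwo_eq (h2 S hS)]; exact Finset.mem_insert_self _ _
      · rw [minTwo_eq (h2 S hS)]; exact Finset.mem_insert_of_mem (Finset.mem_singleton_self _)
    have hreach : ∀ v : Fin n, (graphOf E).Reachable v 0 := by
      have key : ∀ m : ℕ, ∀ v : Fin n, v.val ≤ m → (graphOf E).Reachable v 0 := by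
        intro m
        induction m with
        | zero =>
          intro v hv
          have hv0 : v = 0 := by
            apply Fin.ext
            simpa using hv
          subst hv0
          exact SimpleGraph.Reachable.refl 0
        | succ m ih =>
          intro v hv
          by_cases h0 : v = 0
          · subst h0
            exact SimpleGraph.Reachable.refl 0
          · obtain ⟨S, hS, hsv⟩ := hsm_surj v h0
            have hadj' := hadj S hS
            rw [hsv] at hadj'
            have hlt : (fmin S).val < v.val := by
              have hl := fmin_lt_smin (h2 S hS)
              rw [hsv] at hl
              exact hl
            exact (hadj'.symm.reachable).trans (ih (fmin S) (by omega))
      exact fun v => key n v (by omega)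
    have hconn : (graphOf E).Connected := by
      rw [SimpleGraph.connected_iff]
      exact ⟨fun a b => (hreach a).trans (hreach b).symm, ⟨0⟩⟩
    have huniq : ∀ x y z, (graphOf E).Adj x y → (graphOf E).Adj x z → y < x → z < x → y = z := by
      intro x y z hxy hxz hy hz
      obtain ⟨-, e, he, hxe, hye⟩ := (hxy : x ≠ y ∧ ∃ e ∈ E, x ∈ e ∧ y ∈ e)
      obtain ⟨S, hS, rfl⟩ := Finset.mem_image.1 he
      obtain ⟨-, e', he', hxe', hze'⟩ := (hxz : x ≠ z ∧ ∃ e ∈ E, x ∈ e ∧ z ∈ e)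
      obtain ⟨T, hT, rfl⟩ := Finset.mem_image.1 he'
      rw [minTwo_eq (h2 S hS)] at hxe hye
      rw [minTwo_eq (h2 T hT)] at hxe' hze'
      have hfS := fmin_lt_smin (h2 S hS)
      have hfT := fmin_lt_smin (h2 T hT)
      have hxS : x = smin S := by
        rcases Finset.mem_insert.1 hxe with rfl | hx
        · rcases Finset.mem_insert.1 hye with rfl | hy'
          · exact absurd hy (lt_irrefl _)
          · rw [Finset.mem_singleton] at hy'
            subst hy'
            exact absurd (hy.trans hfS) (lt_irrefl _)
        · exact Finset.mem_singleton.1 hx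
      have hyS : y = fmin S := by
        rcases Finset.mem_insert.1 hye with rfl | hy'
        · rfl
        · rw [Finset.mem_singleton] at hy'
          subst hy'
          rw [hxS] at hy
          exact absurd hy (lt_irrefl _)
      have hxT : x = smin T := by
        rcases Finset.mem_insert.1 hxe' with rfl | hx
        · rcases Finset.mem_insert.1 hze' with rfl | hz'
          · exact absurd hz (lt_irrefl _)
          · rw [Finset.mem_singleton] at hz'
            subst hz'
            exact absurd (hz.trans hfT) (lt_irrefl _)
        · exact Finset.mem_singleton.1 hx
      have hzT : z = fmin T := by
        rcases Finset.mem_insert.1 hze' with rfl | hz'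
        · rfl
        · rw [Finset.mem_singleton] at hz'
          subst hz'
          rw [hxT] at hz
          exact absurd hz (lt_irrefl _)
      have hST : S = T := hsm_inj S hS T hT (by rw [← hxS, ← hxT])
      rw [hyS, hzT, hST]
    exact ⟨hEcard2, hEcard, hconn, acyclic_of_unique_smaller huniq⟩
  · rintro ⟨hE2, hEcard, -, -⟩
    intro S hS T hT hsec
    have hIco : Set.InjOn minTwo (F : Set (Finset (Fin n))) :=
      Finset.injOn_of_card_image_eq (s := F) (f := minTwo) (by rw [hEcard, hcardF])
    rw [secondmin?_eq (h2 S hS), secondmin?_eq (h2 T hT), Option.some_inj] at hsec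
    by_contra hne
    have hvS : smin S ∈ S := smin_mem (h2 S hS)
    have hvT : smin T ∈ T := smin_mem (h2 T hT)
    rw [hsec] at hvS
    have hnd : ¬ Disjoint S T := fun hd => (Finset.disjoint_left.1 hd hvS) hvT
    have aux : ∀ S' T' : Finset (Fin n), S' ∈ F → T' ∈ F → S' ⊆ T' → S' ≠ T' →
        smin S' = smin T' → False := by
      intro S' T' hS' hT' hsub hne' hsm
      have hfm : fmin S' ∈ T' := hsub (fmin_mem ⟨_, smin_mem (h2 S' hS')⟩)
      have hfTS : fmin T' ≤ fmin S' := fmin_le hfm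
      rcases eq_or_lt_of_le hfTS with hfe | hflt
      · apply hne'
        apply hIco (Finset.mem_coe.2 hS') (Finset.mem_coe.2 hT')
        rw [minTwo_eq (h2 S' hS'), minTwo_eq (h2 T' hT'), ← hfe, hsm]
      · have h1 : smin T' ≤ fmin S' := smin_le hfm (ne_of_gt hflt)
        have h2' : fmin S' < smin S' := fmin_lt_smin (h2 S' hS')
        rw [hsm] at h2'
        exact absurd (h1.trans_lt h2') (lt_irrefl _)
    rcases hlam S hS T hT with hc | hc | hc
    · exact aux S T hS hT hc hne hsec
    · exact aux T S hT hS hc (Ne.symm hne) hsec.symm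
    · exact hnd hc
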